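/- Let R be a Noetherian commutative ring and I, J ⊆ R ideals. Then for every n ∈ ℕ there exists m ∈ ℕ such that I^m ∩ J^m ⊆ (I ∩ J)^n. Combined with the trivial inclusion (I ∩ J)^m ⊆ I^m ∩ J^m, the sequences of ideals {(I ∩ J)^n} and {I^n ∩ J^n} are cofinal in each other. -/

import Mathlib

universe u

/-- Let `R` be a Noetherian commutative ring and `I, J ⊆ R` ideals.
For every `n` there is an `m` with `I^m ∩ J^m ⊆ (I ∩ J)^n`; together with the trivial
inclusion `(I ∩ J)^m ⊆ I^m ∩ J^m`, the sequences `{(I ∩ J)^n}` and `{I^n ∩ J^n}` are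
cofinal in each other. -/
theorem pow_inf_ideal_cofinal
    (R : Type u) [CommRing R] [IsNoetherianRing R] (I J : Ideal R) :
    (∀ n : ℕ, ∃ m : ℕ, I ^ m ⊓ J ^ m ≤ (I ⊓ J) ^ n) ∧
      (∀ m : ℕ, (I ⊓ J) ^ m ≤ I ^ m ⊓ J ^ m) := by
  constructor
  · intro n
    -- Artin–Rees for the ideal J and the submodule I^n of R
    obtain ⟨k, hk⟩ := Ideal.exists_pow_inf_eq_pow_smul J (I ^ n : Ideal R)
    refine ⟨n + k, ?_⟩
    have h1 : I ^ (n + k) ⊓ J ^ (n + k) ≤ I ^ n ⊓ J ^ (n + k) :=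
      inf_le_inf_right _ (Ideal.pow_le_pow_right (by omega))
    have h2 := hk (n + k) (by omega)
    have h2' : J ^ (n + k) ⊓ I ^ n = J ^ n * (J ^ k ⊓ I ^ n) := by
      simpa [smul_eq_mul, Nat.add_sub_cancel] using h2
    refine h1.trans ?_
    rw [inf_comm, h2']
    have h3 : J ^ n * (J ^ k ⊓ I ^ n) ≤ J ^ n * I ^ n :=
      Ideal.mul_mono_right inf_le_right
    refine h3.trans ?_
    calc J ^ n * I ^ n = (J * I) ^ n := (mul_pow _ _ _).symm
      _ ≤ (I ⊓ J) ^ n := Ideal.pow_right_mono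
          (le_inf (Ideal.mul_le_right) (Ideal.mul_le_left)) n
  · intro m
    exact le_inf (Ideal.pow_right_mono inf_le_left m) (Ideal.pow_right_mono inf_le_right m)
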